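/- Let G be a compact topological group equipped with its Haar probability measure, and let (ρ, V) be a continuous finite-dimensional irreducible unitary representation of G of dimension d with character χ(g) = Tr(ρ(g)). Then for every integer g ≥ 1, ∫_{G^{2g}} χ([x₁,y₁]·[x₂,y₂]···[x_g,y_g]) dx₁ dy₁ ··· dx_g dy_g = d^{1−2g}, where [x,y] = x y x⁻¹ y⁻¹ denotes the commutator and the integral is with respect to the product of 2g copies of the Haar probability measure. -/

import Mathlib

open MeasureTheory
open scoped commutatorElement

noncomputable section

lemma integrable_of_continuous' {X E : Type*} [TopologicalSpace X] [CompactSpace X]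
    [MeasurableSpace X] [OpensMeasurableSpace X] [NormedAddCommGroup E]
    (ν : Measure X) [IsFiniteMeasure ν] {f : X → E} (hf : Continuous f) :
    Integrable f ν := by
  borelize E
  have hsm : StronglyMeasurable f := by
    rw [stronglyMeasurable_iff_measurable_separable]
    exact ⟨hf.measurable, (isCompact_range hf).isSeparable⟩
  obtain ⟨C, hC⟩ := (isCompact_range (hf.norm)).bddAbove
  exact Integrable.mono' (integrable_const C) hsm.aestronglyMeasurable
    (Filter.Eventually.of_forall fun x => hC (Set.mem_range_self x))

variable {V : Type*} [NormedAddCommGroup V] [InnerProductSpace ℂ V] [FiniteDimensional ℂ V]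
variable {G : Type*} [Group G] [TopologicalSpace G] [IsTopologicalGroup G] [CompactSpace G]
  [MeasurableSpace G] [BorelSpace G]

def RhoHom (ρ : G →* (V ≃ₗᵢ[ℂ] V)) : G →* (V →L[ℂ] V) where
  toFun g := (ρ g).toLinearIsometry.toContinuousLinearMap
  map_one' := by ext v; simp
  map_mul' g h := by ext v; simp

def traceCLM : (V →L[ℂ] V) →L[ℂ] ℂ :=
  LinearMap.toContinuousLinearMap ((LinearMap.trace ℂ V) ∘ₗ (ContinuousLinearMap.coeLM ℂ))

@[simp] lemma traceCLM_apply (T : V →L[ℂ] V) :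
    traceCLM T = LinearMap.trace ℂ V (T : V →ₗ[ℂ] V) := rfl


lemma continuous_RhoHom (ρ : G →* (V ≃ₗᵢ[ℂ] V))
    (hcont : ∀ v : V, Continuous fun g : G => ρ g v) : Continuous (RhoHom ρ) := by
  classical
  set R : G → (V →L[ℂ] V) := fun g => RhoHom ρ g with hR
  let b := Module.finBasis ℂ V
  let φ : (V →L[ℂ] V) →ₗ[ℂ] (Fin (Module.finrank ℂ V) → V) :=
    (LinearMap.pi fun i => (ContinuousLinearMap.apply ℂ V (b i)).toLinearMap)
  have hinj : Function.Injective φ := by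
    intro T S h
    have h2 : (T : V →ₗ[ℂ] V) = (S : V →ₗ[ℂ] V) := b.ext fun i => congrFun h i
    exact ContinuousLinearMap.coe_injective h2
  let ψ := LinearEquiv.ofInjective φ hinj
  have hRψ : ∀ g, R g = ψ.symm ⟨φ (R g), LinearMap.mem_range_self _ _⟩ := fun g =>
    ((LinearEquiv.symm_apply_eq ψ).mpr rfl).symm
  have hcont2 : Continuous fun g => (⟨φ (R g), LinearMap.mem_range_self _ _⟩ :
      LinearMap.range φ) := by
    apply Continuous.subtype_mk
    exact continuous_pi fun i => hcont (b i)
  have hcψ : Continuous (ψ.symm : LinearMap.range φ →ₗ[ℂ] (V →L[ℂ] V)) :=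
    LinearMap.continuous_of_finiteDimensional _
  show Continuous R
  rw [show R = _ from funext hRψ]
  exact hcψ.comp hcont2

lemma avg_conj (μ : Measure G) [μ.IsHaarMeasure] [IsProbabilityMeasure μ]
    (ρ : G →* (V ≃ₗᵢ[ℂ] V))
    (hcont : ∀ v : V, Continuous fun g : G => ρ g v)
    (hirr : ∀ W : Submodule ℂ V, (∀ g : G, ∀ v ∈ W, ρ g v ∈ W) → W = ⊥ ∨ W = ⊤)
    [Nontrivial V] (A : V →L[ℂ] V) :
    ∫ x, RhoHom ρ x * A * RhoHom ρ x⁻¹ ∂μ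
      = ((LinearMap.trace ℂ V (A : V →ₗ[ℂ] V)) / (Module.finrank ℂ V : ℂ)) • 1 := by
  set R := RhoHom ρ with hRdef
  have hcontR : Continuous R := continuous_RhoHom ρ hcont
  have hcont1 : Continuous fun x : G => R x * A * R x⁻¹ :=
    ((hcontR.mul continuous_const).mul (hcontR.comp continuous_inv))
  have hint : Integrable (fun x : G => R x * A * R x⁻¹) μ := integrable_of_continuous' μ hcont1
  set T := ∫ x, R x * A * R x⁻¹ ∂μ with hT
  have hgg : ∀ g : G, R g⁻¹ * R g = 1 := by
    intro g; rw [← map_mul, inv_mul_cancel, map_one]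
  have key : ∀ g : G, R g * T * R g⁻¹ = T := by
    intro g
    have e1 : R g * T = ∫ x, R g * (R x * A * R x⁻¹) ∂μ :=
      (((ContinuousLinearMap.mul ℂ (V →L[ℂ] V)) (R g)).integral_comp_comm hint).symm
    have hint2 : Integrable (fun x : G => R g * (R x * A * R x⁻¹)) μ :=
      integrable_of_continuous' μ (continuous_const.mul hcont1)
    have e2 : (R g * T) * R g⁻¹ = ∫ x, R g * (R x * A * R x⁻¹) * R g⁻¹ ∂μ := by
      rw [e1]
      exact ((((ContinuousLinearMap.mul ℂ (V →L[ℂ] V)).flip (R g⁻¹))).integral_comp_comm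
        hint2).symm
    have e3 : ∀ x : G, R g * (R x * A * R x⁻¹) * R g⁻¹
        = (fun y : G => R y * A * R y⁻¹) (g * x) := by
      intro x
      simp only [map_mul, mul_inv_rev, mul_assoc]
    rw [e2, funext e3, integral_mul_left_eq_self (fun y : G => R y * A * R y⁻¹) g]
  have hcomm : ∀ g : G, T * R g = R g * T := by
    intro g
    conv_lhs => rw [← key g]
    rw [mul_assoc, mul_assoc, hgg, mul_one]
  -- Schur's lemma
  obtain ⟨c, hc⟩ := Module.End.exists_eigenvalue ((T : V →ₗ[ℂ] V) : Module.End ℂ V)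
  have hW : Module.End.eigenspace ((T : V →ₗ[ℂ] V) : Module.End ℂ V) c = ⊤ := by
    have hinvar : ∀ g : G, ∀ v ∈ Module.End.eigenspace ((T : V →ₗ[ℂ] V) : Module.End ℂ V) c,
        ρ g v ∈ Module.End.eigenspace ((T : V →ₗ[ℂ] V) : Module.End ℂ V) c := by
      intro g v hv
      rw [Module.End.mem_eigenspace_iff] at hv ⊢
      have h1 : T (RhoHom ρ g v) = RhoHom ρ g (T v) := by
        have := congrArg (fun S : V →L[ℂ] V => S v) (hcomm g)
        simpa using this
      have h2 : (ρ g) v = RhoHom ρ g v := rfl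
      have hv' : T v = c • v := hv
      rw [h2]
      show T (RhoHom ρ g v) = c • (RhoHom ρ g v)
      rw [h1, hv']
      exact ContinuousLinearMap.map_smul _ _ _
    rcases hirr _ hinvar with h | h
    · exact absurd h hc
    · exact h
  have hTc : T = c • 1 := by
    ext v
    have hv : v ∈ Module.End.eigenspace ((T : V →ₗ[ℂ] V) : Module.End ℂ V) c := by
      rw [hW]; trivial
    rw [Module.End.mem_eigenspace_iff] at hv
    have hv' : T v = c • v := hv
    simpa using hv'
  -- trace computation
  have htrT : LinearMap.trace ℂ V (T : V →ₗ[ℂ] V) = LinearMap.trace ℂ V (A : V →ₗ[ℂ] V) := by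
    have e4 := traceCLM.integral_comp_comm hint
    have e5 : ∀ x : G, traceCLM (R x * A * R x⁻¹) = LinearMap.trace ℂ V (A : V →ₗ[ℂ] V) := by
      intro x
      rw [traceCLM_apply]
      have : ((R x * A * R x⁻¹ : V →L[ℂ] V) : V →ₗ[ℂ] V)
          = ((R x : V →L[ℂ] V) : V →ₗ[ℂ] V) * (A : V →ₗ[ℂ] V)
            * ((R x⁻¹ : V →L[ℂ] V) : V →ₗ[ℂ] V) := rfl
      rw [this, LinearMap.trace_mul_comm, ← mul_assoc]
      have : ((R x⁻¹ : V →L[ℂ] V) : V →ₗ[ℂ] V) * ((R x : V →L[ℂ] V) : V →ₗ[ℂ] V)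
          = ((R x⁻¹ * R x : V →L[ℂ] V) : V →ₗ[ℂ] V) := rfl
      rw [this, hgg, ContinuousLinearMap.one_def]
      simp [Module.End.mul_eq_comp]
    rw [funext e5, integral_const, probReal_univ, one_smul] at e4
    rw [hT]
    exact e4.symm
  have hd : (Module.finrank ℂ V : ℂ) ≠ 0 := by
    simp [Nat.cast_ne_zero, Module.finrank_pos.ne']
  have htrTc : LinearMap.trace ℂ V (T : V →ₗ[ℂ] V) = c * (Module.finrank ℂ V : ℂ) := by
    rw [hTc]
    have : ((c • (1 : V →L[ℂ] V) : V →L[ℂ] V) : V →ₗ[ℂ] V) = c • (1 : V →ₗ[ℂ] V) := rfl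
    rw [this, _root_.map_smul, LinearMap.trace_one]
    exact smul_eq_mul _ _
  have hceq : c = LinearMap.trace ℂ V (A : V →ₗ[ℂ] V) / (Module.finrank ℂ V : ℂ) := by
    field_simp
    rw [← htrT, htrTc]
  rw [hTc, hceq]

local notation "⟪" x ", " y "⟫" => inner (𝕜 := ℂ) x y

lemma trace_eq_sum_inner' {ι : Type*} [Fintype ι] (b : OrthonormalBasis ι ℂ V) (f : V →ₗ[ℂ] V) :
    LinearMap.trace ℂ V f = ∑ i, ⟪b i, f (b i)⟫ := by
  classical
  rw [LinearMap.trace_eq_matrix_trace ℂ b.toBasis f, Matrix.trace]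
  congr 1
  ext i
  rw [Matrix.diag_apply, LinearMap.toMatrix_apply, b.coe_toBasis, b.coe_toBasis_repr_apply,
    b.repr_apply_apply]

lemma inner_orth (μ : Measure G) [μ.IsHaarMeasure] [IsProbabilityMeasure μ]
    (ρ : G →* (V ≃ₗᵢ[ℂ] V))
    (hcont : ∀ v : V, Continuous fun g : G => ρ g v)
    (hirr : ∀ W : Submodule ℂ V, (∀ g : G, ∀ v ∈ W, ρ g v ∈ W) → W = ⊥ ∨ W = ⊤)
    [Nontrivial V] (a b u v : V) :
    ∫ x, ⟪a, RhoHom ρ x v⟫ * ⟪u, RhoHom ρ x⁻¹ b⟫ ∂μ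
      = (⟪u, v⟫ * ⟪a, b⟫) / (Module.finrank ℂ V : ℂ) := by
  set R := RhoHom ρ with hRdef
  have hcontR : Continuous R := continuous_RhoHom ρ hcont
  set A : V →L[ℂ] V := (innerSL ℂ u).smulRight v with hA
  have htrA : LinearMap.trace ℂ V (A : V →ₗ[ℂ] V) = ⟪u, v⟫ := by
    rw [trace_eq_sum_inner' (stdOrthonormalBasis ℂ V)]
    have : ∀ i, ⟪stdOrthonormalBasis ℂ V i, (A : V →ₗ[ℂ] V) (stdOrthonormalBasis ℂ V i)⟫
        = ⟪u, stdOrthonormalBasis ℂ V i⟫ * ⟪stdOrthonormalBasis ℂ V i, v⟫ := by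
      intro i
      show ⟪stdOrthonormalBasis ℂ V i, A (stdOrthonormalBasis ℂ V i)⟫ = _
      rw [hA, ContinuousLinearMap.smulRight_apply, inner_smul_right]
      rfl
    rw [Finset.sum_congr rfl fun i _ => this i]
    exact (stdOrthonormalBasis ℂ V).sum_inner_mul_inner u v
  have havg := avg_conj μ ρ hcont hirr A
  rw [htrA] at havg
  have hcont1 : Continuous fun x : G => R x * A * R x⁻¹ :=
    ((hcontR.mul continuous_const).mul (hcontR.comp continuous_inv))
  have hint : Integrable (fun x : G => R x * A * R x⁻¹) μ := integrable_of_continuous' μ hcont1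
  have h1 : ⟪a, (∫ x, R x * A * R x⁻¹ ∂μ) b⟫ = ∫ x, ⟪a, (R x * A * R x⁻¹) b⟫ ∂μ := by
    calc ⟪a, (∫ x, R x * A * R x⁻¹ ∂μ) b⟫
        = ⟪a, ∫ x, (ContinuousLinearMap.apply ℂ V b) (R x * A * R x⁻¹) ∂μ⟫ := by
          rw [(ContinuousLinearMap.apply ℂ V b).integral_comp_comm hint]
          rfl
      _ = ∫ x, ⟪a, (R x * A * R x⁻¹) b⟫ ∂μ :=
          (integral_inner ((ContinuousLinearMap.apply ℂ V b).integrable_comp hint) a).symm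
  have h2 : ∀ x : G, ⟪a, (R x * A * R x⁻¹) b⟫ = ⟪a, R x v⟫ * ⟪u, R x⁻¹ b⟫ := by
    intro x
    have : (R x * A * R x⁻¹) b = R x (A (R x⁻¹ b)) := rfl
    rw [this, hA, ContinuousLinearMap.smulRight_apply]
    have : (innerSL ℂ u) (R x⁻¹ b) = ⟪u, R x⁻¹ b⟫ := rfl
    rw [this, _root_.map_smul, inner_smul_right]
    ring
  have h3 : ⟪a, (((⟪u, v⟫ : ℂ) / (Module.finrank ℂ V : ℂ)) • (1 : V →L[ℂ] V)) b⟫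
      = (⟪u, v⟫ * ⟪a, b⟫) / (Module.finrank ℂ V : ℂ) := by
    rw [ContinuousLinearMap.smul_apply, ContinuousLinearMap.one_apply, inner_smul_right]
    ring
  rw [← funext h2, ← h1, havg, h3]

lemma B_eq (μ : Measure G) [μ.IsHaarMeasure] [IsProbabilityMeasure μ]
    (ρ : G →* (V ≃ₗᵢ[ℂ] V))
    (hcont : ∀ v : V, Continuous fun g : G => ρ g v)
    (hirr : ∀ W : Submodule ℂ V, (∀ g : G, ∀ v ∈ W, ρ g v ∈ W) → W = ⊥ ∨ W = ⊤)
    [Nontrivial V] :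
    ∫ y, (LinearMap.trace ℂ V ((RhoHom ρ y : V →L[ℂ] V) : V →ₗ[ℂ] V)) • RhoHom ρ y⁻¹ ∂μ
      = ((Module.finrank ℂ V : ℂ)⁻¹) • 1 := by
  classical
  set R := RhoHom ρ with hRdef
  have hcontR : Continuous R := continuous_RhoHom ρ hcont
  set e := stdOrthonormalBasis ℂ V with he
  set d := Module.finrank ℂ V with hd
  have hcontχ : Continuous fun y : G => LinearMap.trace ℂ V ((R y : V →L[ℂ] V) : V →ₗ[ℂ] V) := by
    have : (fun y : G => LinearMap.trace ℂ V ((R y : V →L[ℂ] V) : V →ₗ[ℂ] V))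
        = fun y : G => traceCLM (R y) := rfl
    rw [this]
    exact (traceCLM.continuous).comp hcontR
  have hcintegrand : Continuous fun y : G =>
      (LinearMap.trace ℂ V ((R y : V →L[ℂ] V) : V →ₗ[ℂ] V)) • R y⁻¹ :=
    hcontχ.smul (hcontR.comp continuous_inv)
  have hint : Integrable (fun y : G =>
      (LinearMap.trace ℂ V ((R y : V →L[ℂ] V) : V →ₗ[ℂ] V)) • R y⁻¹) μ :=
    integrable_of_continuous' μ hcintegrand
  refine ContinuousLinearMap.ext fun b => ?_
  refine ext_inner_left ℂ fun a => ?_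
  have h1 : ⟪a, (∫ y, (LinearMap.trace ℂ V ((R y : V →L[ℂ] V) : V →ₗ[ℂ] V)) • R y⁻¹ ∂μ) b⟫
      = ∫ y, ⟪a, ((LinearMap.trace ℂ V ((R y : V →L[ℂ] V) : V →ₗ[ℂ] V)) • R y⁻¹) b⟫ ∂μ := by
    calc ⟪a, (∫ y, (LinearMap.trace ℂ V ((R y : V →L[ℂ] V) : V →ₗ[ℂ] V)) • R y⁻¹ ∂μ) b⟫
        = ⟪a, ∫ y, (ContinuousLinearMap.apply ℂ V b)
            ((LinearMap.trace ℂ V ((R y : V →L[ℂ] V) : V →ₗ[ℂ] V)) • R y⁻¹) ∂μ⟫ := by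
          rw [(ContinuousLinearMap.apply ℂ V b).integral_comp_comm hint]
          rfl
      _ = _ := (integral_inner ((ContinuousLinearMap.apply ℂ V b).integrable_comp hint) a).symm
  rw [h1]
  have h2 : ∀ y : G, ⟪a, ((LinearMap.trace ℂ V ((R y : V →L[ℂ] V) : V →ₗ[ℂ] V)) • R y⁻¹) b⟫
      = ∑ i, ⟪e i, R y (e i)⟫ * ⟪a, R y⁻¹ b⟫ := by
    intro y
    rw [ContinuousLinearMap.smul_apply, inner_smul_right, trace_eq_sum_inner' e]
    rw [Finset.sum_mul]
    rfl
  rw [funext h2]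
  have h3 : ∫ y, ∑ i, ⟪e i, R y (e i)⟫ * ⟪a, R y⁻¹ b⟫ ∂μ
      = ∑ i, ∫ y, ⟪e i, R y (e i)⟫ * ⟪a, R y⁻¹ b⟫ ∂μ := by
    refine integral_finset_sum _ fun i _ => ?_
    refine integrable_of_continuous' μ ?_
    have c1 : Continuous fun y : G => ⟪e i, R y (e i)⟫ :=
      (innerSL ℂ (e i)).continuous.comp (hcont (e i))
    have c2 : Continuous fun y : G => ⟪a, R y⁻¹ b⟫ :=
      (innerSL ℂ a).continuous.comp
        (((ContinuousLinearMap.apply ℂ V b).continuous.comp hcontR).comp continuous_inv)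
    exact c1.mul c2
  rw [h3]
  have h4 : ∀ i, ∫ y, ⟪e i, R y (e i)⟫ * ⟪a, R y⁻¹ b⟫ ∂μ = (⟪a, e i⟫ * ⟪e i, b⟫) / (d : ℂ) :=
    fun i => inner_orth μ ρ hcont hirr (e i) b a (e i)
  rw [Finset.sum_congr rfl fun i _ => h4 i, ← Finset.sum_div]
  rw [e.sum_inner_mul_inner a b]
  rw [ContinuousLinearMap.smul_apply, ContinuousLinearMap.one_apply, inner_smul_right]
  rw [div_eq_inv_mul]

lemma sm_of_continuous_compact {X E : Type*} [TopologicalSpace X] [CompactSpace X]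
    [MeasurableSpace X] [OpensMeasurableSpace X] [NormedAddCommGroup E]
    {f : X → E} (hf : Continuous f) : StronglyMeasurable f := by
  borelize E
  rw [stronglyMeasurable_iff_measurable_separable]
  exact ⟨hf.measurable, (isCompact_range hf).isSeparable⟩

lemma norm_RhoHom_le (ρ : G →* (V ≃ₗᵢ[ℂ] V)) (g : G) : ‖RhoHom ρ g‖ ≤ 1 := by
  refine ContinuousLinearMap.opNorm_le_bound _ zero_le_one fun v => ?_
  have : RhoHom ρ g v = ρ g v := rfl
  rw [this, (ρ g).norm_map, one_mul]

lemma C_eq (μ : Measure G) [μ.IsHaarMeasure] [IsProbabilityMeasure μ]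
    (ρ : G →* (V ≃ₗᵢ[ℂ] V))
    (hcont : ∀ v : V, Continuous fun g : G => ρ g v)
    (hirr : ∀ W : Submodule ℂ V, (∀ g : G, ∀ v ∈ W, ρ g v ∈ W) → W = ⊥ ∨ W = ⊤)
    [Nontrivial V] :
    ∫ p : G × G, RhoHom ρ ⁅p.1, p.2⁆ ∂(μ.prod μ)
      = (((Module.finrank ℂ V : ℂ)) ^ 2)⁻¹ • 1 := by
  set R := RhoHom ρ with hRdef
  set d := Module.finrank ℂ V with hd
  have hcontR : Continuous R := continuous_RhoHom ρ hcont
  have hsmR : StronglyMeasurable R := sm_of_continuous_compact hcontR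
  have hP : ∀ p : G × G, R ⁅p.1, p.2⁆ = R p.1 * R p.2 * R p.1⁻¹ * R p.2⁻¹ := by
    intro p
    rw [commutatorElement_def, map_mul, map_mul, map_mul]
  have hsm : StronglyMeasurable fun p : G × G => R ⁅p.1, p.2⁆ := by
    rw [funext hP]
    exact (((hsmR.comp_measurable measurable_fst).mul
      (hsmR.comp_measurable measurable_snd)).mul
      (hsmR.comp_measurable (continuous_inv.measurable.comp measurable_fst))).mul
      (hsmR.comp_measurable (continuous_inv.measurable.comp measurable_snd))
  have hint : Integrable (fun p : G × G => R ⁅p.1, p.2⁆) (μ.prod μ) :=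
    Integrable.mono' (integrable_const 1) hsm.aestronglyMeasurable
      (Filter.Eventually.of_forall fun p => norm_RhoHom_le ρ _)
  rw [integral_prod_symm _ hint]
  have inner_eq : ∀ y : G, ∫ x, R ⁅x, y⁆ ∂μ
      = ((LinearMap.trace ℂ V ((R y : V →L[ℂ] V) : V →ₗ[ℂ] V)) / (d : ℂ)) • R y⁻¹ := by
    intro y
    have h0 : ∀ x : G, R ⁅x, y⁆ = (R x * R y * R x⁻¹) * R y⁻¹ := fun x => hP (x, y)
    rw [funext h0]
    have hintx : Integrable (fun x : G => R x * R y * R x⁻¹) μ :=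
      integrable_of_continuous' μ ((hcontR.mul continuous_const).mul
        (hcontR.comp continuous_inv))
    have := (((ContinuousLinearMap.mul ℂ (V →L[ℂ] V)).flip (R y⁻¹))).integral_comp_comm hintx
    have e : ∫ x, (R x * R y * R x⁻¹) * R y⁻¹ ∂μ = (∫ x, R x * R y * R x⁻¹ ∂μ) * R y⁻¹ := this
    rw [e, avg_conj μ ρ hcont hirr (R y), smul_mul_assoc, one_mul]
  rw [funext inner_eq]
  have h5 : ∀ y : G, ((LinearMap.trace ℂ V ((R y : V →L[ℂ] V) : V →ₗ[ℂ] V)) / (d : ℂ)) • R y⁻¹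
      = (d : ℂ)⁻¹ • ((LinearMap.trace ℂ V ((R y : V →L[ℂ] V) : V →ₗ[ℂ] V)) • R y⁻¹) := by
    intro y
    rw [smul_smul, div_eq_inv_mul]
  rw [funext h5, integral_smul, B_eq μ ρ hcont hirr, smul_smul]
  congr 1
  rw [sq, mul_inv]

lemma integral_pi_list_prod (ν : Measure (G × G)) [IsProbabilityMeasure ν]
    (f : G × G → (V →L[ℂ] V)) (hsm : StronglyMeasurable f) (hbd : ∀ p, ‖f p‖ ≤ 1) (n : ℕ) :
    ∫ z : Fin n → G × G, ((List.finRange n).map fun i => f (z i)).prod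
        ∂(Measure.pi fun _ : Fin n => ν) = (∫ p, f p ∂ν) ^ n := by
  have hlist : ∀ (k : ℕ) (l : List (Fin k)), StronglyMeasurable
      (fun w : Fin k → G × G => (l.map fun i => f (w i)).prod) := by
    intro k l
    induction l with
    | nil => simpa using stronglyMeasurable_const
    | cons a t iht =>
      simp only [List.map_cons, List.prod_cons]
      exact (hsm.comp_measurable (measurable_pi_apply a)).mul iht
  have hbdlist : ∀ (k : ℕ) (l : List (Fin k)) (w : Fin k → G × G),
      ‖(l.map fun i => f (w i)).prod‖ ≤ 1 := by
    intro k l w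
    induction l with
    | nil =>
      simp only [List.map_nil, List.prod_nil]
      rw [ContinuousLinearMap.one_def]
      exact ContinuousLinearMap.norm_id_le
    | cons a t iht =>
      simp only [List.map_cons, List.prod_cons]
      calc ‖f (w a) * (t.map fun i => f (w i)).prod‖
          ≤ ‖f (w a)‖ * ‖(t.map fun i => f (w i)).prod‖ := norm_mul_le _ _
        _ ≤ 1 * 1 := mul_le_mul (hbd _) iht (norm_nonneg _) zero_le_one
        _ = 1 := one_mul 1
  induction n with
  | zero => simp
  | succ m ih =>
    have hmp := measurePreserving_piFinSuccAbove (fun _ : Fin (m + 1) => ν) 0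
    set e := MeasurableEquiv.piFinSuccAbove (fun _ : Fin (m + 1) => G × G) 0 with he
    set Q : (Fin m → G × G) → (V →L[ℂ] V) :=
      fun w => ((List.finRange m).map fun i => f (w i)).prod with hQ
    have hQsm : StronglyMeasurable Q := hlist m _
    have hQint : Integrable Q (Measure.pi fun _ : Fin m => ν) :=
      Integrable.mono' (integrable_const 1) hQsm.aestronglyMeasurable
        (Filter.Eventually.of_forall fun w => hbdlist m _ w)
    have hfint : Integrable f ν :=
      Integrable.mono' (integrable_const 1) hsm.aestronglyMeasurable
        (Filter.Eventually.of_forall hbd)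
    have hstep : ∀ z : Fin (m + 1) → G × G,
        ((List.finRange (m + 1)).map fun i => f (z i)).prod
          = (fun q : (G × G) × (Fin m → G × G) => f q.1 * Q q.2) (e z) := by
      intro z
      have h2 : (e z).2 = fun j => z j.succ := by
        funext j
        show z (Fin.succAbove 0 j) = z j.succ
        rw [Fin.zero_succAbove]
      show _ = f (e z).1 * Q (e z).2
      rw [h2]
      rw [List.finRange_succ, List.map_cons, List.prod_cons, List.map_map]
      rfl
    rw [funext hstep, hmp.integral_comp e.measurableEmbedding
      (fun q : (G × G) × (Fin m → G × G) => f q.1 * Q q.2)]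
    have hgsm : StronglyMeasurable (fun q : (G × G) × (Fin m → G × G) => f q.1 * Q q.2) :=
      (hsm.comp_measurable measurable_fst).mul (hQsm.comp_measurable measurable_snd)
    have hgint : Integrable (fun q : (G × G) × (Fin m → G × G) => f q.1 * Q q.2)
        (ν.prod (Measure.pi fun _ : Fin m => ν)) := by
      refine Integrable.mono' (integrable_const 1) hgsm.aestronglyMeasurable
        (Filter.Eventually.of_forall fun q => ?_)
      calc ‖f q.1 * Q q.2‖ ≤ ‖f q.1‖ * ‖Q q.2‖ := norm_mul_le _ _
        _ ≤ 1 * 1 := mul_le_mul (hbd _) (hbdlist m _ _) (norm_nonneg _) zero_le_one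
        _ = 1 := one_mul 1
    rw [integral_prod _ hgint]
    have hin : ∀ p : G × G, ∫ w, f p * Q w ∂(Measure.pi fun _ : Fin m => ν)
        = f p * ∫ w, Q w ∂(Measure.pi fun _ : Fin m => ν) := fun p =>
      ((ContinuousLinearMap.mul ℂ (V →L[ℂ] V)) (f p)).integral_comp_comm hQint
    rw [funext hin]
    have hout : ∫ p, f p * (∫ w, Q w ∂(Measure.pi fun _ : Fin m => ν)) ∂ν
        = (∫ p, f p ∂ν) * ∫ w, Q w ∂(Measure.pi fun _ : Fin m => ν) :=
      ((ContinuousLinearMap.mul ℂ (V →L[ℂ] V)).flip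
        (∫ w, Q w ∂(Measure.pi fun _ : Fin m => ν))).integral_comp_comm hfint
    rw [hout, hQ]
    rw [ih, pow_succ']

end

/-- For a continuous finite-dimensional irreducible unitary representation `ρ` of a compact
topological group `G` (Haar probability measure `μ`), with character `χ(g) = Tr(ρ(g))` and
dimension `d`, for every integer `g ≥ 1` (here `n`),
`∫_{G^{2n}} χ([x₁,y₁]⋯[xₙ,yₙ]) dx dy = d^(1-2n)`,
where `[x,y] = x y x⁻¹ y⁻¹` and the integral is over `n` independent pairs, each distributed
according to the product of two copies of the Haar probability measure. -/
theorem integral_character_product_commutators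
    {G : Type*} [Group G] [TopologicalSpace G] [IsTopologicalGroup G] [CompactSpace G]
    [MeasurableSpace G] [BorelSpace G]
    (μ : Measure G) [μ.IsHaarMeasure] [IsProbabilityMeasure μ]
    {V : Type*} [NormedAddCommGroup V] [InnerProductSpace ℂ V] [FiniteDimensional ℂ V]
    (ρ : G →* (V ≃ₗᵢ[ℂ] V))
    (hcont : ∀ v : V, Continuous fun g : G => ρ g v)
    (hirr : ∀ W : Submodule ℂ V, (∀ g : G, ∀ v ∈ W, ρ g v ∈ W) → W = ⊥ ∨ W = ⊤)
    (χ : G → ℂ)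
    (hχ : ∀ g : G, χ g = LinearMap.trace ℂ V ((ρ g).toLinearEquiv : V →ₗ[ℂ] V))
    (n : ℕ) (hn : 1 ≤ n) :
    ∫ z : Fin n → G × G,
        χ (((List.finRange n).map fun i => ⁅(z i).1, (z i).2⁆).prod)
        ∂(Measure.pi fun _ : Fin n => μ.prod μ)
      = (Module.finrank ℂ V : ℂ) ^ (1 - 2 * (n : ℤ)) := by
  rcases subsingleton_or_nontrivial V with hsub | hnt
  · have hd0 : Module.finrank ℂ V = 0 := Module.finrank_zero_of_subsingleton
    have hchi : ∀ g : G, χ g = 0 := by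
      intro g
      rw [hχ g]
      have : ((ρ g).toLinearEquiv : V →ₗ[ℂ] V) = 0 := Subsingleton.elim _ _
      rw [this, map_zero]
    simp only [hchi, integral_zero, hd0, Nat.cast_zero]
    rw [zero_zpow]
    omega
  · set R := RhoHom ρ with hRdef
    set d := Module.finrank ℂ V with hd
    have hcontR : Continuous R := continuous_RhoHom ρ hcont
    have hsmR : StronglyMeasurable R := sm_of_continuous_compact hcontR
    have hdne : (d : ℂ) ≠ 0 := by
      simp [hd, Nat.cast_ne_zero, Module.finrank_pos.ne']
    set P : G × G → (V →L[ℂ] V) := fun p => R ⁅p.1, p.2⁆ with hPdef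
    have hPsm : StronglyMeasurable P := by
      have hP : ∀ p : G × G, R ⁅p.1, p.2⁆ = R p.1 * R p.2 * R p.1⁻¹ * R p.2⁻¹ := by
        intro p
        rw [commutatorElement_def, map_mul, map_mul, map_mul]
      rw [hPdef, funext hP]
      exact (((hsmR.comp_measurable measurable_fst).mul
        (hsmR.comp_measurable measurable_snd)).mul
        (hsmR.comp_measurable (continuous_inv.measurable.comp measurable_fst))).mul
        (hsmR.comp_measurable (continuous_inv.measurable.comp measurable_snd))
    have hPbd : ∀ p : G × G, ‖P p‖ ≤ 1 := fun p => norm_RhoHom_le ρ _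
    have hbdlist : ∀ (l : List (Fin n)) (w : Fin n → G × G),
        ‖(l.map fun i => P (w i)).prod‖ ≤ 1 := by
      intro l w
      induction l with
      | nil =>
        simp only [List.map_nil, List.prod_nil]
        rw [ContinuousLinearMap.one_def]
        exact ContinuousLinearMap.norm_id_le
      | cons a t iht =>
        simp only [List.map_cons, List.prod_cons]
        calc ‖P (w a) * (t.map fun i => P (w i)).prod‖
            ≤ ‖P (w a)‖ * ‖(t.map fun i => P (w i)).prod‖ := norm_mul_le _ _
          _ ≤ 1 * 1 := mul_le_mul (hPbd _) iht (norm_nonneg _) zero_le_one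
          _ = 1 := one_mul 1
    have hFsm : StronglyMeasurable
        (fun z : Fin n → G × G => ((List.finRange n).map fun i => P (z i)).prod) := by
      generalize (List.finRange n) = l
      induction l with
      | nil => simpa using stronglyMeasurable_const
      | cons a t iht =>
        simp only [List.map_cons, List.prod_cons]
        exact (hPsm.comp_measurable (measurable_pi_apply a)).mul iht
    have hFint : Integrable (fun z : Fin n → G × G =>
        ((List.finRange n).map fun i => P (z i)).prod)
        (Measure.pi fun _ : Fin n => μ.prod μ) :=
      Integrable.mono' (integrable_const 1) hFsm.aestronglyMeasurable
        (Filter.Eventually.of_forall fun w => hbdlist _ w)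
    have hχR : ∀ w : G, χ w = traceCLM (R w) := by
      intro w
      rw [hχ w]
      rfl
    have hkey : ∀ z : Fin n → G × G,
        χ (((List.finRange n).map fun i => ⁅(z i).1, (z i).2⁆).prod)
          = traceCLM (((List.finRange n).map fun i => P (z i)).prod) := by
      intro z
      rw [hχR, map_list_prod, List.map_map]
      rfl
    rw [funext hkey, traceCLM.integral_comp_comm hFint,
      integral_pi_list_prod (μ.prod μ) P hPsm hPbd n]
    have hC : ∫ p, P p ∂(μ.prod μ) = (((d : ℂ)) ^ 2)⁻¹ • 1 := C_eq μ ρ hcont hirr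
    rw [hC, smul_pow, one_pow, _root_.map_smul, traceCLM_apply]
    have h1 : ((1 : V →L[ℂ] V) : V →ₗ[ℂ] V) = 1 := rfl
    rw [h1, LinearMap.trace_one, ← hd]
    -- arithmetic
    have h2n : (1 : ℤ) - 2 * (n : ℤ) = 1 - ((2 * n : ℕ) : ℤ) := by push_cast; ring
    rw [h2n, zpow_sub₀ hdne, zpow_one, zpow_natCast, ← inv_pow, ← pow_mul]
    rw [smul_eq_mul, div_eq_mul_inv, mul_comm, inv_pow]
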